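/- The coalescence of two singular graphs is singular: if det(A(G₁)) = 0 and det(A(G₂)) = 0, and G is obtained by identifying a vertex of G₁ with a vertex of G₂, then det(A(G)) = 0. -/

import Mathlib

open scoped Classical

/-- Determinant of the adjacency matrix of the subgraph of `G` induced on `s`. -/
noncomputable def inducedDet {V : Type} [Fintype V] (G : SimpleGraph V) (s : Finset V) : ℝ :=
  Matrix.det (Matrix.of fun i j : {x // x ∈ s} => if G.Adj i j then (1 : ℝ) else 0)

/-- Real-valued adjacency indicator. -/
noncomputable def adjm {V : Type} (G : SimpleGraph V) (i j : V) : ℝ :=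
  if G.Adj i j then 1 else 0

lemma adjm_self {V : Type} (G : SimpleGraph V) (i : V) : adjm G i i = 0 := by
  simp [adjm]

lemma adjm_of_not {V : Type} (G : SimpleGraph V) {i j : V} (h : ¬ G.Adj i j) :
    adjm G i j = 0 := by simp [adjm, h]

private lemma extract_ker {V : Type} [Fintype V] (G : SimpleGraph V) (s : Finset V)
    (h : inducedDet G s = 0) :
    ∃ x : V → ℝ, (∀ a, a ∉ s → x a = 0) ∧ (∃ a, x a ≠ 0) ∧
      ∀ i ∈ s, (∑ j, adjm G i j * x j) = 0 := by
  obtain ⟨w, hw0, hw⟩ := (Matrix.exists_mulVec_eq_zero_iff).mpr h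
  refine ⟨fun a => if ha : a ∈ s then w ⟨a, ha⟩ else 0, ?_, ?_, ?_⟩
  · intro a ha; simp [ha]
  · obtain ⟨⟨a, ha⟩, hne⟩ := Function.ne_iff.mp hw0
    exact ⟨a, by simpa [ha] using hne⟩
  · intro i hi
    have h0 := congrFun hw ⟨i, hi⟩
    simp only [Matrix.mulVec, Matrix.of_apply, dotProduct, Pi.zero_apply] at h0
    calc (∑ j, adjm G i j * (if hj : j ∈ s then w ⟨j, hj⟩ else 0))
        = ∑ j ∈ s, adjm G i j * (if hj : j ∈ s then w ⟨j, hj⟩ else 0) := by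
          symm
          apply Finset.sum_subset (Finset.subset_univ s)
          intro j _ hj
          simp [hj]
      _ = ∑ j : {x // x ∈ s}, adjm G i j.val * w j := by
          rw [← Finset.sum_coe_sort s
            (fun j => adjm G i j * (if hj : j ∈ s then w ⟨j, hj⟩ else 0))]
          apply Finset.sum_congr rfl
          intro j _
          simp [j.2]
      _ = 0 := by
          rw [← h0]
          apply Finset.sum_congr rfl
          intro j _
          simp [adjm]

private lemma ker_det {V : Type} [Fintype V] (G : SimpleGraph V) (x : V → ℝ)
    (hne : ∃ a, x a ≠ 0)
    (hk : ∀ i, (∑ j, adjm G i j * x j) = 0) :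
    inducedDet G Finset.univ = 0 := by
  apply (Matrix.exists_mulVec_eq_zero_iff).mp
  refine ⟨fun i => x i.val, ?_, ?_⟩
  · obtain ⟨a, ha⟩ := hne
    intro h0
    exact ha (congrFun h0 ⟨a, Finset.mem_univ a⟩)
  · funext i
    simp only [Matrix.mulVec, Matrix.of_apply, dotProduct, Pi.zero_apply]
    calc (∑ j : {x // x ∈ (Finset.univ : Finset V)},
          (if G.Adj i.val j.val then (1:ℝ) else 0) * x j.val)
        = ∑ j : {x // x ∈ (Finset.univ : Finset V)}, adjm G i.val j.val * x j.val := by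
          apply Finset.sum_congr rfl; intro j _; simp [adjm]
      _ = ∑ j ∈ (Finset.univ : Finset V), adjm G i.val j * x j :=
          Finset.sum_coe_sort _ (fun j => adjm G i.val j * x j)
      _ = 0 := hk i.val

/-- The coalescence of two singular graphs is singular. -/
theorem stmt_12 {V : Type} [Fintype V] [DecidableEq V] (G : SimpleGraph V)
    (v : V) (A B : Finset V)
    (hU : A ∪ B = Finset.univ) (hI : A ∩ B = {v})
    (hsep : ∀ a ∈ A, ∀ b ∈ B, a ≠ v → b ≠ v → ¬G.Adj a b)
    (h1 : inducedDet G A = 0) (h2 : inducedDet G B = 0) :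
    inducedDet G Finset.univ = 0 := by
  classical
  have hvA : v ∈ A := by
    have : v ∈ A ∩ B := hI ▸ Finset.mem_singleton_self v
    exact (Finset.mem_inter.mp this).1
  have hvB : v ∈ B := by
    have : v ∈ A ∩ B := hI ▸ Finset.mem_singleton_self v
    exact (Finset.mem_inter.mp this).2
  have hmem : ∀ a : V, a ∈ A ∨ a ∈ B := by
    intro a
    have : a ∈ A ∪ B := hU ▸ Finset.mem_univ a
    exact Finset.mem_union.mp this
  have hAB : ∀ a, a ∈ A → a ∈ B → a = v := by
    intro a haA haB
    have : a ∈ A ∩ B := Finset.mem_inter.mpr ⟨haA, haB⟩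
    exact Finset.mem_singleton.mp (hI ▸ this)
  obtain ⟨x, hxsup, ⟨ax, hax⟩, hx⟩ := extract_ker G A h1
  obtain ⟨y, hysup, ⟨ay, hay⟩, hy⟩ := extract_ker G B h2
  by_cases hyv : y v = 0
  · -- extend y by zero
    apply ker_det G y ⟨ay, hay⟩
    intro i
    rcases hmem i with hiA | hiB
    · by_cases hiv : i = v
      · rw [hiv]; exact hy v hvB
      · apply Finset.sum_eq_zero
        intro j _
        by_cases hjB : j ∈ B
        · by_cases hjv : j = v
          · rw [hjv, hyv]; ring
          · rw [adjm_of_not G (hsep i hiA j hjB hiv hjv)]; ring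
        · rw [hysup j hjB]; ring
    · exact hy i hiB
  · by_cases hxv : x v = 0
    · apply ker_det G x ⟨ax, hax⟩
      intro i
      rcases hmem i with hiA | hiB
      · exact hx i hiA
      · by_cases hiv : i = v
        · rw [hiv]; exact hx v hvA
        · apply Finset.sum_eq_zero
          intro j _
          by_cases hjA : j ∈ A
          · by_cases hjv : j = v
            · rw [hjv, hxv]; ring
            · have hnadj : ¬ G.Adj i j :=
                fun h => hsep j hjA i hiB hjv hiv (G.adj_symm h)
              rw [adjm_of_not G hnadj]; ring
          · rw [hxsup j hjA]; ring
    · -- both nonzero at v; combine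
      set c : ℝ := x v / y v with hc
      set W : V → ℝ := fun j => if j ∈ A then x j else c * y j with hW
      have hWv : W v = x v := by simp [hW, hvA]
      apply ker_det G W ⟨v, by rw [hWv]; exact hxv⟩
      intro i
      have hsplit : (Finset.univ : Finset V) = A ∪ (B \ {v}) := by
        ext a
        simp only [Finset.mem_univ, Finset.mem_union, Finset.mem_sdiff,
          Finset.mem_singleton, true_iff]
        rcases hmem a with h | h
        · exact Or.inl h
        · by_cases haA : a ∈ A
          · exact Or.inl haA
          · exact Or.inr ⟨h, fun hav => haA (hav ▸ hvA)⟩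
      have hdisj : Disjoint A (B \ {v}) := by
        rw [Finset.disjoint_left]
        intro a haA haBv
        rw [Finset.mem_sdiff, Finset.mem_singleton] at haBv
        exact haBv.2 (hAB a haA haBv.1)
      have hsum : (∑ j, adjm G i j * W j)
          = (∑ j ∈ A, adjm G i j * x j) + (∑ j ∈ B \ {v}, adjm G i j * (c * y j)) := by
        rw [hsplit, Finset.sum_union hdisj]
        congr 1
        · apply Finset.sum_congr rfl; intro j hj; simp [hW, hj]
        · apply Finset.sum_congr rfl
          intro j hj
          rw [Finset.mem_sdiff, Finset.mem_singleton] at hj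
          have hjA : j ∉ A := fun h => hj.2 (hAB j h hj.1)
          simp [hW, hjA]
      have hxA : ∀ i ∈ A, (∑ j ∈ A, adjm G i j * x j) = 0 := by
        intro i hi
        rw [← hx i hi]
        apply Finset.sum_subset (Finset.subset_univ A)
        intro j _ hj
        rw [hxsup j hj]; ring
      have hyB : ∀ i ∈ B, (∑ j ∈ B, adjm G i j * y j) = 0 := by
        intro i hi
        rw [← hy i hi]
        apply Finset.sum_subset (Finset.subset_univ B)
        intro j _ hj
        rw [hysup j hj]; ring
      have hyBv : ∀ i ∈ B, (∑ j ∈ B \ {v}, adjm G i j * (c * y j))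
          = - (adjm G i v * (c * y v)) := by
        intro i hi
        have hsd : (∑ j ∈ B \ {v}, adjm G i j * (c * y j))
            = (∑ j ∈ B, adjm G i j * (c * y j)) - adjm G i v * (c * y v) := by
          rw [Finset.sum_sdiff_eq_sub (Finset.singleton_subset_iff.mpr hvB),
            Finset.sum_singleton]
        rw [hsd]
        have hmul : (∑ j ∈ B, adjm G i j * (c * y j)) = c * ∑ j ∈ B, adjm G i j * y j := by
          rw [Finset.mul_sum]; apply Finset.sum_congr rfl; intro j _; ring
        rw [hmul, hyB i hi]
        ring
      rw [hsum]
      rcases hmem i with hiA | hiB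
      · by_cases hiv : i = v
        · rw [hiv, hxA v hvA, hyBv v hvB, adjm_self]
          ring
        · rw [hxA i hiA]
          have hz : (∑ j ∈ B \ {v}, adjm G i j * (c * y j)) = 0 := by
            apply Finset.sum_eq_zero
            intro j hj
            rw [Finset.mem_sdiff, Finset.mem_singleton] at hj
            rw [adjm_of_not G (hsep i hiA j hj.1 hiv hj.2)]; ring
          rw [hz]; ring
      · by_cases hiv : i = v
        · rw [hiv, hxA v hvA, hyBv v hvB, adjm_self]
          ring
        · have hxAi : (∑ j ∈ A, adjm G i j * x j) = adjm G i v * x v := by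
            rw [← Finset.sum_singleton (fun j => adjm G i j * x j) v]
            symm
            apply Finset.sum_subset (Finset.singleton_subset_iff.mpr hvA)
            intro j hjA hjv
            rw [Finset.mem_singleton] at hjv
            have hnadj : ¬ G.Adj i j :=
              fun h => hsep j hjA i hiB hjv hiv (G.adj_symm h)
            rw [adjm_of_not G hnadj]; ring
          rw [hxAi, hyBv i hiB, hc]
          field_simp
          ring
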